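/- arXiv:0809.3106 — 2 statements merged into one kernel-verified Lean document; each statement's English description precedes it below -/
import Mathlib

section
/- If the map α: X → X is invertible, its inverse α^{−1} is measurable, and the measure m is α-invariant, then τ(μ) = 0 for every μ ∈ M(X,m). -/
open MeasureTheory Filter Topology
open scoped Classical ENNReal NNReal

noncomputable section

namespace TEntropyPaper

variable {X : Type*} [MeasurableSpace X]

/-- The mapping `α` is measurable and the shift operator `A f = f ∘ α` is bounded on
`L¹(X, m)`; equivalently `m (α⁻¹ G) ≤ C · m G` for all measurable `G`. -/
def ShiftBounded (m : Measure X) (α : X → X) : Prop :=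
  Measurable α ∧ ∃ C : ℝ≥0, ∀ s : Set X, MeasurableSet s → m (α ⁻¹' s) ≤ (C : ℝ≥0∞) * m s

/-- A positive normalized linear functional on `L^∞(X, m)`, encoded as a real-valued
map on functions `X → ℝ` which is linear and positive on essentially bounded
(strongly) measurable functions, respects `m`-a.e. equality, takes the value `1` at the
constant function `1` and (as a normalization) vanishes on functions not in `L^∞`. -/
structure PosFunctional (m : Measure X) where
  toFun : (X → ℝ) → ℝ
  map_add' : ∀ f g : X → ℝ, MemLp f ⊤ m → MemLp g ⊤ m → toFun (f + g) = toFun f + toFun g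
  map_smul' : ∀ (c : ℝ) (f : X → ℝ), MemLp f ⊤ m → toFun (c • f) = c * toFun f
  nonneg' : ∀ f : X → ℝ, MemLp f ⊤ m → (0 : X → ℝ) ≤ᵐ[m] f → 0 ≤ toFun f
  map_one' : toFun (fun _ => 1) = 1
  congr_ae' : ∀ f g : X → ℝ, MemLp f ⊤ m → MemLp g ⊤ m → f =ᵐ[m] g → toFun f = toFun g
  zero_of_ne' : ∀ f : X → ℝ, ¬ MemLp f ⊤ m → toFun f = 0

/-- Evaluation of a functional in `M(X,m)` against the `L^∞` test functions. -/
def evalMap (m : Measure X) (μ : PosFunctional m) : {f : X → ℝ // MemLp f ⊤ m} → ℝ :=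
  fun f => μ.toFun f.1

/-- The weak-* topology on `M(X,m)`: the topology of pointwise convergence on `L^∞`
test functions. -/
instance (m : Measure X) : TopologicalSpace (PosFunctional m) :=
  TopologicalSpace.induced (evalMap m) inferInstance

/-- `α`-invariance of a functional `μ ∈ M(X,m)`: `μ(f ∘ α) = μ(f)`. -/
def PosFunctional.Invariant (α : X → X) {m : Measure X} (μ : PosFunctional m) : Prop :=
  ∀ f : X → ℝ, MemLp f ⊤ m → μ.toFun (f ∘ α) = μ.toFun f

/-- A measurable partition of unity on `X`: a finite set of nonnegative functions in
`L^∞(X,m)` summing to `1` almost everywhere. -/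
def IsPartUnity (m : Measure X) (D : Finset (X → ℝ)) : Prop :=
  (∀ g ∈ D, MemLp g ⊤ m ∧ (0 : X → ℝ) ≤ᵐ[m] g) ∧ ∀ᵐ x ∂m, ∑ g ∈ D, g x = 1

/-- Birkhoff sum `S_n φ = φ + φ∘α + ⋯ + φ∘α^{n-1}`. -/
def birkhoff (α : X → X) (φ : X → ℝ) (n : ℕ) (x : X) : ℝ :=
  ∑ i ∈ Finset.range n, φ (α^[i] x)

/-- The unit sphere of `L¹(X,m)`. -/
def UnitL1 (m : Measure X) : Set (X → ℝ) := {f | Integrable f m ∧ ∫ x, |f x| ∂m = 1}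

/-- The integral `∫_X g · |f ∘ αⁿ| dm`. -/
def wInt (m : Measure X) (α : X → X) (n : ℕ) (g f : X → ℝ) : ℝ :=
  ∫ x, g x * |f (α^[n] x)| ∂m

/-- The summand `w · ln((∫_X g·|f∘αⁿ| dm)/w)` in the definition of `t`-entropy,
with values in `EReal`: it is `0` when `w = 0` and `-∞` when the integral vanishes
while `w ≠ 0`. -/
def tauTermR (m : Measure X) (α : X → X) (n : ℕ) (w : ℝ) (f g : X → ℝ) : EReal :=
  if w = 0 then 0
  else if wInt m α n g f = 0 then ⊥
  else ((w * Real.log (wInt m α n g f / w) : ℝ) : EReal)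

/-- `τ_n(w, D)` for an abstract weight function `w` on the elements of `D`. -/
def tauNDW (m : Measure X) (α : X → X) (n : ℕ) (D : Finset (X → ℝ))
    (w : (X → ℝ) → ℝ) : EReal :=
  if ∃ g ∈ D, (∫⁻ x, ENNReal.ofReal (g x) ∂m) = 0 ∧ 0 < w g then ⊥
  else ⨆ f ∈ UnitL1 m, ∑ g ∈ D, tauTermR m α n (w g) f g

/-- `τ_n(μ, D)` for `μ ∈ M(X,m)` and a measurable partition of unity `D`. -/
def tauND (m : Measure X) (α : X → X) (μ : PosFunctional m) (n : ℕ)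
    (D : Finset (X → ℝ)) : EReal :=
  tauNDW m α n D (fun g => μ.toFun g)

/-- `τ_n(μ) = inf_D τ_n(μ, D)` over all measurable partitions of unity `D`. -/
def tauN (m : Measure X) (α : X → X) (μ : PosFunctional m) (n : ℕ) : EReal :=
  ⨅ D ∈ {D : Finset (X → ℝ) | IsPartUnity m D}, tauND m α μ n D

/-- The `t`-entropy `τ(μ) = inf_{n ≥ 1} τ_n(μ)/n`. -/
def tEntropy (m : Measure X) (α : X → X) (μ : PosFunctional m) : EReal :=
  ⨅ n : {k : ℕ // 0 < k}, ((((n : ℕ) : ℝ)⁻¹ : ℝ) : EReal) * tauN m α μ (n : ℕ)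

/-- The operator norm `‖A_φⁿ‖` of the `n`-th power of the weighted shift operator
`A_φ f = e^φ · (f ∘ α)` on `L¹(X,m)`, i.e. the supremum of `∫ e^{S_nφ}|f∘αⁿ| dm`
over the unit sphere of `L¹`. -/
def weightedOpNorm (m : Measure X) (α : X → X) (φ : X → ℝ) (n : ℕ) : ℝ :=
  sSup {r : ℝ | ∃ f ∈ UnitL1 m,
    r = ∫ x, Real.exp (birkhoff α φ n x) * |f (α^[n] x)| ∂m}

/-- `D_m`: the elements of `D` which are not `m`-a.e. zero (i.e. `∫ g dm > 0`). -/
def Dm (m : Measure X) (D : Finset (X → ℝ)) : Finset (X → ℝ) :=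
  D.filter (fun g => (∫⁻ x, ENNReal.ofReal (g x) ∂m) ≠ 0)

/-- The simplex `M(D)` of probability measures on the finite set `D`, realized as
weight functions vanishing outside `D`. -/
def MD (D : Finset (X → ℝ)) : Set ((X → ℝ) → ℝ) :=
  {w | (∀ g ∈ D, 0 ≤ w g) ∧ (∑ g ∈ D, w g) = 1 ∧ ∀ g ∉ D, w g = 0}

/-- The sum `Σ_{g ∈ D_m} w(g)·ln((∫ g·|f∘αⁿ| dm)/w(g))`. -/
def tauSumDm (m : Measure X) (α : X → X) (n : ℕ) (D : Finset (X → ℝ))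
    (w : (X → ℝ) → ℝ) (f : X → ℝ) : EReal :=
  ∑ g ∈ Dm m D, tauTermR m α n (w g) f g

/-- `τ_n(w, D)` with the sum restricted to `D_m`, for `w ∈ M(D_m)`. -/
def tauDm (m : Measure X) (α : X → X) (n : ℕ) (D : Finset (X → ℝ))
    (w : (X → ℝ) → ℝ) : EReal :=
  ⨆ f ∈ UnitL1 m, tauSumDm m α n D w f

/-- `w'` is an optimizing limit for `(w, n, D)`: there is a sequence of nonnegative
unit-norm `f_i ∈ L¹(X,m)` along which the supremum defining `τ_n(w,D)` is attained in
the limit and `w'(g) = lim_i ∫ g·(f_i∘αⁿ) dm` for each `g ∈ D_m`. -/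
def IsOptLimit (m : Measure X) (α : X → X) (n : ℕ) (D : Finset (X → ℝ))
    (w w' : (X → ℝ) → ℝ) : Prop :=
  ∃ F : ℕ → (X → ℝ),
    (∀ i, F i ∈ UnitL1 m ∧ (0 : X → ℝ) ≤ᵐ[m] F i) ∧
    (∀ g ∈ Dm m D, Tendsto (fun i => wInt m α n g (F i)) atTop (𝓝 (w' g))) ∧
    Tendsto (fun i => tauSumDm m α n D w (F i)) atTop (𝓝 (tauDm m α n D w))


section AuxLemmas
variable {m : Measure X} (μ : PosFunctional m)

lemma PF_zero : μ.toFun 0 = 0 := by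
  have h0 : MemLp (0 : X → ℝ) ⊤ m := MemLp.zero
  have := μ.map_smul' 0 0 h0
  simpa using this

lemma PF_congr {f g : X → ℝ} (hf : MemLp f ⊤ m) (hfg : f =ᵐ[m] g) :
    μ.toFun f = μ.toFun g :=
  μ.congr_ae' f g hf (hf.ae_eq hfg) hfg

lemma PF_const (c : ℝ) : μ.toFun (fun _ => c) = c := by
  have h1 : MemLp (fun _ : X => (1:ℝ)) ⊤ m := memLp_top_const 1
  have := μ.map_smul' c (fun _ => 1) h1
  rw [μ.map_one'] at this
  have he : (c • fun _ : X => (1:ℝ)) = fun _ : X => c := by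
    funext x; simp
  rw [he] at this
  simpa using this

lemma PF_mono {f g : X → ℝ} (hf : MemLp f ⊤ m) (hg : MemLp g ⊤ m)
    (h : f ≤ᵐ[m] g) : μ.toFun f ≤ μ.toFun g := by
  have hsub : MemLp (g - f) ⊤ m := hg.sub hf
  have hpos : 0 ≤ μ.toFun (g - f) := by
    refine μ.nonneg' _ hsub ?_
    filter_upwards [h] with x hx
    simpa using hx
  have : μ.toFun (f + (g - f)) = μ.toFun f + μ.toFun (g - f) :=
    μ.map_add' f (g - f) hf hsub
  have he : f + (g - f) = g := by ring
  rw [he] at this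
  linarith

lemma PF_nonneg_of {g : X → ℝ} (hg : MemLp g ⊤ m) (h : (0:X → ℝ) ≤ᵐ[m] g) :
    0 ≤ μ.toFun g := μ.nonneg' g hg h

lemma PF_sum {ι : Type*} (s : Finset ι) (c : ι → ℝ) (g : ι → X → ℝ)
    (hg : ∀ i ∈ s, MemLp (g i) ⊤ m) :
    μ.toFun (fun x => ∑ i ∈ s, c i * g i x) = ∑ i ∈ s, c i * μ.toFun (g i) := by
  induction s using Finset.induction_on with
  | empty => simp only [Finset.sum_empty]; exact PF_zero μ
  | insert a s hnot ih =>
    have hga := hg a (Finset.mem_insert_self a s)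
    have hgs : ∀ i ∈ s, MemLp (g i) ⊤ m := fun i hi => hg i (Finset.mem_insert_of_mem hi)
    have hsum : MemLp (fun x => ∑ i ∈ s, c i * g i x) ⊤ m := by
      have : (fun x => ∑ i ∈ s, c i * g i x) = ∑ i ∈ s, (fun x => c i * g i x) := by
        funext x; simp
      rw [this]
      exact memLp_finset_sum' s (fun i hi => (hgs i hi).const_mul (c i))
    have hca : MemLp (fun x => c a * g a x) ⊤ m := hga.const_mul (c a)
    have he : (fun x => ∑ i ∈ insert a s, c i * g i x)
        = (fun x => c a * g a x) + (fun x => ∑ i ∈ s, c i * g i x) := by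
      funext x; simp [Finset.sum_insert hnot]
    rw [he, μ.map_add' _ _ hca hsum, Finset.sum_insert hnot, ih hgs]
    congr 1
    have : (fun x => c a * g a x) = c a • g a := by funext x; simp
    rw [this, μ.map_smul' _ _ hga]

lemma PF_m_ne_zero (ν : PosFunctional m) : m ≠ 0 := by
  intro h
  have h1 : MemLp (fun _ : X => (1:ℝ)) ⊤ m := memLp_top_const 1
  have heq : (fun _ : X => (1:ℝ)) =ᵐ[m] 0 := by
    rw [h, ae_zero]; exact Filter.eventually_bot
  have hc := ν.congr_ae' _ _ h1 MemLp.zero heq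
  rw [ν.map_one', PF_zero ν] at hc
  exact one_ne_zero hc

lemma memT_exists_bound {g : X → ℝ} (hg : MemLp g ⊤ m) :
    ∃ C : ℝ, 0 ≤ C ∧ ∀ᵐ x ∂m, |g x| ≤ C := by
  refine ⟨(eLpNormEssSup g m).toReal, ENNReal.toReal_nonneg, ?_⟩
  have hlt : eLpNormEssSup g m < ⊤ := by
    have := hg.2; rwa [eLpNorm_exponent_top] at this
  filter_upwards [ae_le_eLpNormEssSup (f := g) (μ := m)] with x hx
  have : (‖g x‖₊ : ℝ≥0∞) ≤ eLpNormEssSup g m := hx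
  have := ENNReal.toReal_mono hlt.ne this
  simpa [Real.norm_eq_abs] using this

/-- Existence of a probability density supported in a set of positive measure. -/
lemma exists_density [SigmaFinite m] {A : Set X} (hA : MeasurableSet A) (hpos : 0 < m A) :
    ∃ ρ : X → ℝ, Measurable ρ ∧ (∀ x, 0 ≤ ρ x) ∧ Integrable ρ m ∧
      (∫ x, ρ x ∂m) = 1 ∧ ∀ x ∉ A, ρ x = 0 := by
  obtain ⟨B, hBmeas, hBA, hB0, hBtop⟩ := Measure.exists_subset_measure_lt_top hA hpos
  set c : ℝ := ((m B).toReal)⁻¹ with hc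
  have htR : 0 < (m B).toReal := ENNReal.toReal_pos hB0.ne' hBtop.ne
  refine ⟨fun x => c * Set.indicator B (fun _ => (1:ℝ)) x, ?_, ?_, ?_, ?_, ?_⟩
  · exact (measurable_const.indicator hBmeas).const_mul c
  · intro x
    have : (0:ℝ) ≤ Set.indicator B (fun _ => (1:ℝ)) x :=
      Set.indicator_nonneg (fun _ _ => zero_le_one) x
    positivity
  · refine Integrable.const_mul ?_ c
    exact (integrable_indicator_iff hBmeas).2 (integrableOn_const hBtop.ne)
  · rw [integral_const_mul]
    rw [integral_indicator hBmeas]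
    simp only [integral_const, smul_eq_mul, mul_one]
    rw [measureReal_restrict_apply_univ]
    simp only [hc]
    exact inv_mul_cancel₀ htR.ne'
  · intro x hx
    have : x ∉ B := fun hxB => hx (hBA hxB)
    simp [Set.indicator_of_notMem this]

/-- An `L^∞` function times an integrable function is integrable. -/
lemma integrable_linfty_mul {g ρ : X → ℝ} (hg : MemLp g ⊤ m) (hρ : Integrable ρ m) :
    Integrable (fun x => g x * ρ x) m := by
  obtain ⟨C, hC0, hCb⟩ := memT_exists_bound hg
  refine Integrable.mono' (hρ.abs.const_mul C) (hg.aestronglyMeasurable.mul hρ.aestronglyMeasurable) ?_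
  filter_upwards [hCb] with x hx
  rw [Real.norm_eq_abs, abs_mul]
  exact mul_le_mul hx le_rfl (abs_nonneg _) hC0

/-- If `∫ h ρ < u` for every probability density `ρ`, then `h ≤ u` a.e. -/
lemma ae_le_of_forall_density [SigmaFinite m] {h : X → ℝ} {u : ℝ} (hh : MemLp h ⊤ m)
    (hu : ∀ ρ : X → ℝ, Measurable ρ → (∀ x, 0 ≤ ρ x) → Integrable ρ m →
      (∫ x, ρ x ∂m) = 1 → (∫ x, h x * ρ x ∂m) < u) :
    h ≤ᵐ[m] fun _ => u := by
  obtain ⟨C, hC0, hCb⟩ := memT_exists_bound hh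
  -- a measurable, everywhere-bounded representative of h
  obtain ⟨h', h'meas, hh'⟩ := hh.aestronglyMeasurable.aemeasurable
  set h'' : X → ℝ := fun x => max (-C) (min C (h' x)) with hh''def
  have h''meas : Measurable h'' := measurable_const.max (measurable_const.min h'meas)
  have hhh'' : h =ᵐ[m] h'' := by
    filter_upwards [hh', hCb] with x hx hxb
    rw [hh''def]
    simp only [← hx]
    rw [abs_le] at hxb
    rw [min_eq_right hxb.2, max_eq_right hxb.1]
  by_contra hcon
  -- the set where h'' > u has positive measure
  have hA : 0 < m {x | u < h'' x} := by
    rcases eq_zero_or_pos (m {x | u < h'' x}) with h0 | h0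
    · exfalso
      refine hcon ?_
      have : ∀ᵐ x ∂m, ¬ u < h'' x := by
        rw [ae_iff]; simpa using h0
      filter_upwards [this, hhh''] with x hx hx2
      simp only [Set.mem_setOf_eq, not_lt] at hx
      rw [hx2]; exact hx
    · exact h0
  -- find k with positive measure of {h'' ≥ u + 1/(k+1)}
  have hU : {x | u < h'' x} = ⋃ k : ℕ, {x | u + (1:ℝ)/(k+1) ≤ h'' x} := by
    ext x
    simp only [Set.mem_setOf_eq, Set.mem_iUnion]
    constructor
    · intro hx
      obtain ⟨k, hk⟩ := exists_nat_one_div_lt (sub_pos.2 hx)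
      exact ⟨k, by linarith⟩
    · rintro ⟨k, hk⟩
      have : (0:ℝ) < 1/(k+1) := by positivity
      linarith
  have : ∃ k : ℕ, 0 < m {x | u + (1:ℝ)/(k+1) ≤ h'' x} := by
    by_contra hcon2
    push_neg at hcon2
    simp only [le_zero_iff] at hcon2
    have : m {x | u < h'' x} = 0 := by
      rw [hU]
      exact measure_iUnion_null hcon2
    exact absurd this hA.ne'
  obtain ⟨k, hk⟩ := this
  set δ : ℝ := 1/(k+1)
  have hδ : 0 < δ := by positivity
  have hAmeas : MeasurableSet {x | u + δ ≤ h'' x} := measurableSet_le measurable_const h''meas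
  obtain ⟨ρ, hρmeas, hρ0, hρint, hρ1, hρsupp⟩ := exists_density (m := m) hAmeas hk
  have hlt := hu ρ hρmeas hρ0 hρint hρ1
  -- but ∫ h ρ ≥ u + δ
  have hint : (∫ x, h x * ρ x ∂m) = ∫ x, h'' x * ρ x ∂m := by
    refine integral_congr_ae ?_
    filter_upwards [hhh''] with x hx
    rw [hx]
  have hge : u + δ ≤ ∫ x, h'' x * ρ x ∂m := by
    have hint2 : Integrable (fun x => h'' x * ρ x) m := by
      refine Integrable.mono' (hρint.abs.const_mul C)
        (h''meas.mul hρmeas).aestronglyMeasurable ?_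
      refine Filter.Eventually.of_forall fun x => ?_
      rw [Real.norm_eq_abs, abs_mul]
      have hb : |h'' x| ≤ C := by
        rw [hh''def, abs_le]
        constructor
        · simp [le_max_iff]
        · rcases le_total (h' x) C with hc | hc
          · simp [max_le_iff, min_le_iff, hc, hC0, neg_le_self hC0]
          · simp [max_le_iff, min_le_iff, hC0, neg_le_self hC0]
      exact mul_le_mul hb le_rfl (abs_nonneg _) hC0
    have hptw : ∀ x, (u + δ) * ρ x ≤ h'' x * ρ x := by
      intro x
      rcases (hρ0 x).lt_or_eq with hpos | heq0
      · by_cases hmem : x ∈ {x | u + δ ≤ h'' x}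
        · exact mul_le_mul_of_nonneg_right hmem (hρ0 x)
        · rw [hρsupp x hmem] at hpos; exact absurd rfl hpos.ne
      · rw [← heq0]; simp
    have := integral_mono (hρint.const_mul (u+δ)) hint2 hptw
    calc u + δ = (u + δ) * ∫ x, ρ x ∂m := by rw [hρ1]; ring
    _ = ∫ x, (u + δ) * ρ x ∂m := (integral_const_mul _ _).symm
    _ ≤ ∫ x, h'' x * ρ x ∂m := this
  rw [hint] at hlt
  linarith

/-- Key approximation: the values `μ(g)`, `g ∈ D`, can be simultaneously approximated
by `∫ g ρ dm` for a probability density `ρ`. -/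
lemma exists_density_approx [SigmaFinite m] (μ : PosFunctional m) (D : Finset (X → ℝ))
    (hD : ∀ g ∈ D, MemLp g ⊤ m) {δ : ℝ} (hδ : 0 < δ) :
    ∃ ρ : X → ℝ, Measurable ρ ∧ (∀ x, 0 ≤ ρ x) ∧ Integrable ρ m ∧ (∫ x, ρ x ∂m) = 1 ∧
      ∀ g ∈ D, |(∫ x, g x * ρ x ∂m) - μ.toFun g| < δ := by
  classical
  set S : Set (↥D → ℝ) := {v | ∃ ρ : X → ℝ, Measurable ρ ∧ (∀ x, 0 ≤ ρ x) ∧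
    Integrable ρ m ∧ (∫ x, ρ x ∂m) = 1 ∧ ∀ g : ↥D, v g = ∫ x, g.1 x * ρ x ∂m} with hS
  have hDmem : ∀ g : ↥D, MemLp g.1 ⊤ m := fun g => hD g.1 g.2
  have hSconv : Convex ℝ S := by
    rintro v1 ⟨ρ1, hρ1m, hρ1n, hρ1i, hρ1u, hv1⟩ v2 ⟨ρ2, hρ2m, hρ2n, hρ2i, hρ2u, hv2⟩
      a b ha hb hab
    refine ⟨fun x => a * ρ1 x + b * ρ2 x, (hρ1m.const_mul a).add (hρ2m.const_mul b),
      fun x => add_nonneg (mul_nonneg ha (hρ1n x)) (mul_nonneg hb (hρ2n x)),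
      (hρ1i.const_mul a).add (hρ2i.const_mul b), ?_, ?_⟩
    · rw [integral_add (hρ1i.const_mul a) (hρ2i.const_mul b), integral_const_mul,
        integral_const_mul, hρ1u, hρ2u]
      simpa using hab
    · intro g
      have h1 : Integrable (fun x => g.1 x * ρ1 x) m := integrable_linfty_mul (hDmem g) hρ1i
      have h2 : Integrable (fun x => g.1 x * ρ2 x) m := integrable_linfty_mul (hDmem g) hρ2i
      have : (fun x => g.1 x * (a * ρ1 x + b * ρ2 x))
          = fun x => a * (g.1 x * ρ1 x) + b * (g.1 x * ρ2 x) := by funext x; ring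
      simp only [Pi.add_apply, Pi.smul_apply, smul_eq_mul, this]
      rw [integral_add (h1.const_mul a) (h2.const_mul b), integral_const_mul,
        integral_const_mul, hv1 g, hv2 g]
  set w0 : ↥D → ℝ := fun g => μ.toFun g.1 with hw0
  have hmem : w0 ∈ closure S := by
    by_contra hcon
    obtain ⟨f, u, hfu, huf⟩ :=
      geometric_hahn_banach_closed_point hSconv.closure isClosed_closure hcon
    set c : ↥D → ℝ := fun g => f (Pi.single g 1) with hc
    have hrep : ∀ v : ↥D → ℝ, f v = ∑ g : ↥D, v g * c g := by
      intro v
      conv_lhs => rw [pi_eq_sum_univ v]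
      rw [map_sum]
      refine Finset.sum_congr rfl fun g _ => ?_
      have he : (fun j => if g = j then (1:ℝ) else 0) = Pi.single g 1 := by
        funext j; simp [Pi.single_apply, eq_comm]
      rw [he, f.map_smul]
      simp [hc, smul_eq_mul]
    set h : X → ℝ := fun x => ∑ g : ↥D, c g * g.1 x with hh
    have hhmem : MemLp h ⊤ m := by
      have : h = ∑ g : ↥D, (fun x => c g * g.1 x) := by funext x; simp [hh]
      rw [this]
      exact memLp_finset_sum' _ (fun g _ => (hDmem g).const_mul (c g))
    -- for every density, ∫ h ρ < u
    have hdens : ∀ ρ : X → ℝ, Measurable ρ → (∀ x, 0 ≤ ρ x) → Integrable ρ m →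
        (∫ x, ρ x ∂m) = 1 → (∫ x, h x * ρ x ∂m) < u := by
      intro ρ hρm hρn hρi hρu
      set v : ↥D → ℝ := fun g => ∫ x, g.1 x * ρ x ∂m with hv
      have hvS : v ∈ S := ⟨ρ, hρm, hρn, hρi, hρu, fun g => rfl⟩
      have hlt : f v < u := hfu v (subset_closure hvS)
      have : (∫ x, h x * ρ x ∂m) = f v := by
        rw [hrep v]
        have he : ∀ x, h x * ρ x = ∑ g : ↥D, c g * (g.1 x * ρ x) := by
          intro x; rw [hh]; rw [Finset.sum_mul]; exact Finset.sum_congr rfl fun g _ => by ring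
        rw [integral_congr_ae (Filter.Eventually.of_forall he)]
        rw [integral_finset_sum _ (fun g _ =>
          (integrable_linfty_mul (hDmem g) hρi).const_mul (c g))]
        refine Finset.sum_congr rfl fun g _ => ?_
        rw [integral_const_mul, hv]
        ring
      rwa [this]
    have hae : h ≤ᵐ[m] fun _ => u := ae_le_of_forall_density hhmem hdens
    have hle : μ.toFun h ≤ u := by
      have := PF_mono μ hhmem (memLp_top_const u) hae
      rwa [PF_const μ u] at this
    have heq : μ.toFun h = f w0 := by
      rw [hrep w0, hh]
      rw [PF_sum μ Finset.univ c (fun g => g.1) (fun g _ => hDmem g)]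
      exact Finset.sum_congr rfl fun g _ => by rw [hw0]; ring
    rw [heq] at hle
    exact absurd hle (not_le.2 huf)
  rw [Metric.mem_closure_iff] at hmem
  obtain ⟨v, hvS, hvd⟩ := hmem δ hδ
  obtain ⟨ρ, hρm, hρn, hρi, hρu, hvρ⟩ := hvS
  refine ⟨ρ, hρm, hρn, hρi, hρu, fun g hg => ?_⟩
  have := dist_le_pi_dist v w0 ⟨g, hg⟩
  rw [Real.dist_eq] at this
  calc |(∫ x, g x * ρ x ∂m) - μ.toFun g| = |v ⟨g, hg⟩ - w0 ⟨g, hg⟩| := by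
        rw [hvρ ⟨g, hg⟩, hw0]
  _ ≤ dist v w0 := this
  _ < δ := by rwa [dist_comm] at hvd

end AuxLemmas


/-- If `α` is invertible with measurable inverse and the measure `m` is `α`-invariant,
then `τ(μ) = 0` for every `μ ∈ M(X,m)`. -/
theorem tEntropy_eq_zero_of_invertible
    (m : Measure X) [SigmaFinite m] (α : X → X) (hα : ShiftBounded m α)
    (β : X → X) (hβ : Measurable β)
    (hβα : Function.LeftInverse β α) (hαβ : Function.RightInverse β α)
    (hm : MeasurePreserving α m m) :
    ∀ μ : PosFunctional m, tEntropy m α μ = 0 := by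
  classical
  intro μ
  have hm0 : m ≠ 0 := PF_m_ne_zero μ
  have hmβ : MeasurePreserving β m m := by
    refine ⟨hβ, ?_⟩
    conv_lhs => rw [← hm.map_eq]
    rw [Measure.map_map hβ hm.measurable]
    have : β ∘ α = id := funext hβα
    rw [this, Measure.map_id]
  -- measurable equivalences for the iterates
  let en : ℕ → (X ≃ᵐ X) := fun n =>
    ⟨⟨α^[n], β^[n], hβα.iterate n, hαβ.iterate n⟩, hm.measurable.iterate n, hβ.iterate n⟩
  have hen : ∀ n (x : X), (en n) x = α^[n] x := fun n x => rfl
  have hensymm : ∀ n (x : X), (en n).symm x = β^[n] x := fun n x => rfl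
  -- a reference element of the unit sphere of L¹
  obtain ⟨ρ0, hρ0m, hρ0n, hρ0i, hρ0u, -⟩ :=
    exists_density (m := m) MeasurableSet.univ
      (by rwa [Measure.measure_univ_pos])
  have hf0 : ρ0 ∈ UnitL1 m := by
    refine ⟨hρ0i, ?_⟩
    rw [← hρ0u]
    exact integral_congr_ae (Filter.Eventually.of_forall fun x => abs_of_nonneg (hρ0n x))
  -- the composition integral identity
  have hcompint : ∀ (n : ℕ) (F : X → ℝ), (∫ x, F (α^[n] x) ∂m) = ∫ x, F x ∂m := by
    intro n F
    have := MeasurePreserving.integral_comp' (f := en n) (hm.iterate n) F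
    simpa [hen] using this
  have hcompintβ : ∀ (n : ℕ) (F : X → ℝ), (∫ x, F (β^[n] x) ∂m) = ∫ x, F x ∂m := by
    intro n F
    have := MeasurePreserving.integral_comp' (f := (en n).symm) (hmβ.iterate n) F
    simpa [hensymm] using this
  -- Upper bound: the trivial partition
  set D₀ : Finset (X → ℝ) := {fun _ => (1:ℝ)} with hD₀
  have hD₀part : IsPartUnity m D₀ := by
    constructor
    · intro g hg
      rw [hD₀, Finset.mem_singleton] at hg
      subst hg
      exact ⟨memLp_top_const 1, Filter.Eventually.of_forall fun x => zero_le_one⟩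
    · refine Filter.Eventually.of_forall fun x => ?_
      rw [hD₀, Finset.sum_singleton]
  have hD₀ne : ¬ ∃ g ∈ D₀, (∫⁻ x, ENNReal.ofReal (g x) ∂m) = 0 ∧ 0 < μ.toFun g := by
    rintro ⟨g, hg, h0, -⟩
    rw [hD₀, Finset.mem_singleton] at hg
    subst hg
    rw [show (fun x : X => ENNReal.ofReal (1:ℝ)) = fun _ => (1:ℝ≥0∞) by simp] at h0
    rw [lintegral_one] at h0
    exact (Measure.measure_univ_ne_zero.2 hm0) h0
  have hupper : ∀ n : ℕ, tauND m α μ n D₀ = 0 := by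
    intro n
    rw [tauND, tauNDW, if_neg hD₀ne]
    have hterm : ∀ f ∈ UnitL1 m,
        (∑ g ∈ D₀, tauTermR m α n (μ.toFun g) f g) = 0 := by
      intro f hf
      rw [hD₀, Finset.sum_singleton]
      have hμ1 : μ.toFun (fun _ => (1:ℝ)) = 1 := μ.map_one'
      have hwint : wInt m α n (fun _ => (1:ℝ)) f = 1 := by
        rw [wInt]
        simp only [one_mul]
        rw [hcompint n (fun y => |f y|), hf.2]
      rw [tauTermR, hμ1, hwint]
      norm_num
    apply le_antisymm
    · exact iSup₂_le fun f hf => le_of_eq (hterm f hf)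
    · exact le_iSup₂_of_le ρ0 hf0 (le_of_eq (hterm ρ0 hf0).symm)
  -- Lower bound: every partition gives nonnegative τ_n
  have hlower : ∀ (n : ℕ) (D : Finset (X → ℝ)), IsPartUnity m D →
      (0:EReal) ≤ tauND m α μ n D := by
    intro n D hD
    have hDmem : ∀ g ∈ D, MemLp g ⊤ m := fun g hg => (hD.1 g hg).1
    have hDnn : ∀ g ∈ D, (0:X → ℝ) ≤ᵐ[m] g := fun g hg => (hD.1 g hg).2
    have hμnn : ∀ g ∈ D, 0 ≤ μ.toFun g := fun g hg =>
      PF_nonneg_of μ (hDmem g hg) (hDnn g hg)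
    have hμ0 : ∀ g ∈ D, (∫⁻ x, ENNReal.ofReal (g x) ∂m) = 0 → μ.toFun g = 0 := by
      intro g hg h0
      have haem : AEMeasurable (fun x => ENNReal.ofReal (g x)) m :=
        ENNReal.measurable_ofReal.comp_aemeasurable
          (hDmem g hg).aestronglyMeasurable.aemeasurable
      have hae := (lintegral_eq_zero_iff' haem).1 h0
      have hg0 : g =ᵐ[m] 0 := by
        filter_upwards [hae, hDnn g hg] with x hx hx2
        simp only [Pi.zero_apply] at hx ⊢
        rw [ENNReal.ofReal_eq_zero] at hx
        exact le_antisymm hx hx2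
      rw [PF_congr μ (hDmem g hg) hg0, PF_zero μ]
    have hcond : ¬ ∃ g ∈ D, (∫⁻ x, ENNReal.ofReal (g x) ∂m) = 0 ∧ 0 < μ.toFun g := by
      rintro ⟨g, hg, h0, hpos⟩
      exact absurd (hμ0 g hg h0) hpos.ne'
    have hsum1 : (∑ g ∈ D, μ.toFun g) = 1 := by
      have h1 := PF_sum μ D (fun _ => (1:ℝ)) id (fun g hg => hDmem g hg)
      simp only [one_mul, id] at h1
      have hmemsum : MemLp (fun x => ∑ g ∈ D, g x) ⊤ m := by
        have : (fun x => ∑ g ∈ D, g x) = ∑ g ∈ D, g := by funext x; simp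
        rw [this]
        exact memLp_finset_sum' D (fun g hg => hDmem g hg)
      have hae : (fun x => ∑ g ∈ D, g x) =ᵐ[m] fun _ => (1:ℝ) := hD.2
      rw [← h1, PF_congr μ hmemsum hae, PF_const μ 1]
    -- the key estimate: for every ε > 0 there is f in the unit sphere with
    -- ∑ tauTermR ≥ -ε
    have hkey : ∀ ε : ℝ, 0 < ε → ∃ f ∈ UnitL1 m,
        ((-ε : ℝ) : EReal) ≤ ∑ g ∈ D, tauTermR m α n (μ.toFun g) f g := by
      intro ε hε
      set D' : Finset (X → ℝ) := D.filter (fun g => μ.toFun g ≠ 0) with hD'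
      by_cases hne : D'.Nonempty
      · -- nontrivial case
        set mmin : ℝ := D'.inf' hne μ.toFun with hmmin
        have hmminpos : 0 < mmin := by
          rw [hmmin, Finset.lt_inf'_iff]
          intro g hg
          rw [hD', Finset.mem_filter] at hg
          exact (hμnn g hg.1).lt_of_ne' hg.2
        have hexplt : Real.exp (-ε) < 1 := by
          rw [Real.exp_lt_one_iff]; linarith
        set δ : ℝ := mmin * (1 - Real.exp (-ε)) with hδdef
        have hδpos : 0 < δ := by
          apply mul_pos hmminpos; linarith
        obtain ⟨ρ, hρm, hρn, hρi, hρu, happrox⟩ :=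
          exists_density_approx μ D hDmem hδpos
        set f : X → ℝ := fun x => ρ (β^[n] x) with hfdef
        have hfint : Integrable f m := by
          have := (hmβ.iterate n).integrable_comp (g := ρ) hρm.aestronglyMeasurable
          exact this.2 hρi
        have hfunit : f ∈ UnitL1 m := by
          refine ⟨hfint, ?_⟩
          rw [hfdef]
          have := hcompintβ n (fun y => |ρ y|)
          rw [this]
          rw [← hρu]
          exact integral_congr_ae (Filter.Eventually.of_forall fun x => abs_of_nonneg (hρn x))
        have hwint : ∀ g ∈ D, wInt m α n g f = ∫ x, g x * ρ x ∂m := by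
          intro g hg
          rw [wInt]
          refine integral_congr_ae (Filter.Eventually.of_forall fun x => ?_)
          rw [hfdef]
          simp only
          rw [Function.LeftInverse.iterate hβα n x, abs_of_nonneg (hρn x)]
        refine ⟨f, hfunit, ?_⟩
        -- per-term estimate
        have hterm : ∀ g ∈ D,
            (((-ε * μ.toFun g : ℝ)) : EReal) ≤ tauTermR m α n (μ.toFun g) f g := by
          intro g hg
          by_cases hz : μ.toFun g = 0
          · rw [tauTermR, if_pos hz, hz]
            norm_num
          · have hgD' : g ∈ D' := by rw [hD', Finset.mem_filter]; exact ⟨hg, hz⟩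
            have hμpos : 0 < μ.toFun g := (hμnn g hg).lt_of_ne' hz
            have hge : mmin ≤ μ.toFun g := Finset.inf'_le _ hgD'
            have happ := happrox g hg
            rw [abs_sub_lt_iff] at happ
            have hwlow : μ.toFun g - δ ≤ wInt m α n g f := by
              rw [hwint g hg]; linarith [happ.2]
            have hpos2 : 0 < μ.toFun g - δ := by
              have : δ < mmin := by
                rw [hδdef]
                nlinarith [Real.exp_pos (-ε)]
              linarith
            have hwpos : 0 < wInt m α n g f := lt_of_lt_of_le hpos2 hwlow
            rw [tauTermR, if_neg hz, if_neg hwpos.ne']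
            rw [EReal.coe_le_coe_iff]
            have hratio : Real.exp (-ε) ≤ wInt m α n g f / μ.toFun g := by
              rw [le_div_iff₀ hμpos]
              have h2 : Real.exp (-ε) * μ.toFun g ≤ μ.toFun g - δ := by
                rw [hδdef]
                nlinarith [Real.exp_pos (-ε)]
              linarith
            have hlog : -ε ≤ Real.log (wInt m α n g f / μ.toFun g) := by
              rw [Real.le_log_iff_exp_le (div_pos hwpos hμpos)]
              exact hratio
            calc -ε * μ.toFun g = μ.toFun g * (-ε) := by ring
              _ ≤ μ.toFun g * Real.log (wInt m α n g f / μ.toFun g) :=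
                  mul_le_mul_of_nonneg_left hlog hμpos.le
        -- sum the per-term estimates
        have hcoesum : ∀ (F : (X → ℝ) → ℝ),
            ((∑ g ∈ D, F g : ℝ) : EReal) = ∑ g ∈ D, ((F g : ℝ) : EReal) := by
          intro F
          exact map_sum (⟨⟨Real.toEReal, EReal.coe_zero⟩, EReal.coe_add⟩ : ℝ →+ EReal) F D
        have hsumlb : ((-ε : ℝ) : EReal) ≤ ∑ g ∈ D, (((-ε * μ.toFun g : ℝ)) : EReal) := by
          rw [← hcoesum (fun g => -ε * μ.toFun g)]
          rw [EReal.coe_le_coe_iff]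
          rw [← Finset.mul_sum, hsum1, mul_one]
        exact le_trans hsumlb (Finset.sum_le_sum hterm)
      · -- all weights vanish
        rw [Finset.not_nonempty_iff_eq_empty, hD', Finset.filter_eq_empty_iff] at hne
        refine ⟨ρ0, hf0, ?_⟩
        have : ∀ g ∈ D, tauTermR m α n (μ.toFun g) ρ0 g = 0 := by
          intro g hg
          have hz : μ.toFun g = 0 := by simpa using hne hg
          rw [tauTermR, if_pos hz]
        rw [Finset.sum_congr rfl this]
        rw [Finset.sum_const, smul_zero]
        rw [show ((-ε : ℝ) : EReal) ≤ (0:EReal) ↔ True from iff_of_true (by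
          rw [show (0:EReal) = ((0:ℝ):EReal) by simp, EReal.coe_le_coe_iff]; linarith) trivial]
        trivial
    -- conclude nonnegativity of the supremum
    rw [tauND, tauNDW, if_neg hcond]
    by_contra hneg
    push_neg at hneg
    obtain ⟨c, hc1, hc2⟩ := exists_between hneg
    have hcbot : (⊥:EReal) < c := lt_of_le_of_lt bot_le hc1
    have hctop : c < ⊤ := hc2.trans_le le_top
    have hcr : c = ((c.toReal : ℝ) : EReal) := (EReal.coe_toReal hctop.ne hcbot.ne').symm
    have hcneg : c.toReal < 0 := by
      have := hc2
      rw [hcr, show (0:EReal) = ((0:ℝ):EReal) by simp, EReal.coe_lt_coe_iff] at this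
      exact this
    obtain ⟨f, hf, hbound⟩ := hkey (-(c.toReal)) (by linarith)
    have : c ≤ ∑ g ∈ D, tauTermR m α n (μ.toFun g) f g := by
      rw [hcr]
      simpa using hbound
    have hle : (∑ g ∈ D, tauTermR m α n (μ.toFun g) f g) ≤
        ⨆ f ∈ UnitL1 m, ∑ g ∈ D, tauTermR m α n (μ.toFun g) f g :=
      le_iSup₂_of_le f hf le_rfl
    exact absurd (lt_of_le_of_lt (this.trans hle) hc1) (lt_irrefl _)
  -- τ_n(μ) = 0 for every n
  have htauN : ∀ n : ℕ, tauN m α μ n = 0 := by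
    intro n
    apply le_antisymm
    · calc tauN m α μ n ≤ tauND m α μ n D₀ := iInf₂_le D₀ hD₀part
        _ = 0 := hupper n
    · exact le_iInf₂ fun D hD => hlower n D hD
  -- conclude
  rw [tEntropy]
  have : ∀ k : {k : ℕ // 0 < k},
      (((((k:ℕ) : ℝ)⁻¹ : ℝ) : EReal) * tauN m α μ (k:ℕ)) = 0 := by
    intro k
    rw [htauN, mul_zero]
  rw [iInf_congr this]
  exact iInf_const

end TEntropyPaper
end
end

section
/- Fix n ∈ ℕ and a measurable partition of unity D on X. For every μ₀ ∈ M(D_m) and every real t > τ_n(μ₀,D) there exist a neighborhood O(μ₀) of μ₀ in M(D) and a measure μ ∈ O(μ₀) ∩ Int M(D_m) together with an optimizing limit μ' for (μ,n,D) such that τ_n(ν,μ,D) := Σ_{g∈D_m} ν(g)·ln(μ'(g)/μ(g)) < t for all ν ∈ O(μ₀). -/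
open MeasureTheory Filter Topology
open scoped Classical ENNReal NNReal

noncomputable section

namespace TEntropyPaper

variable {X : Type*} [MeasurableSpace X]

/-! ### Auxiliary lemmas -/

private lemma ecoe_sum {γ : Type*} (s : Finset γ) (a : γ → ℝ) :
    ((∑ g ∈ s, a g : ℝ) : EReal) = ∑ g ∈ s, ((a g : ℝ) : EReal) := by
  classical
  induction s using Finset.induction_on with
  | empty => simp
  | insert a s h ih => rw [Finset.sum_insert h, Finset.sum_insert h, EReal.coe_add, ih]

private lemma sqrt_bound {x y : ℝ} (hx : 0 < x) (hy : 0 < y) :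
    x * Real.log (y / x) ≤ 2 * Real.sqrt (x * y) := by
  have h1 : Real.log (y / x) = 2 * Real.log (Real.sqrt (y / x)) := by
    rw [Real.log_sqrt (by positivity)]; ring
  have h2 : Real.log (Real.sqrt (y / x)) ≤ Real.sqrt (y / x) :=
    (Real.log_le_sub_one_of_pos (Real.sqrt_pos.2 (by positivity))).trans (by linarith)
  have h3 : x * Real.sqrt (y / x) = Real.sqrt (x * y) := by
    rw [show y / x = x * y / x ^ 2 by field_simp,
      Real.sqrt_div (by positivity) (x ^ 2), Real.sqrt_sq hx.le]
    field_simp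
  calc x * Real.log (y / x) = 2 * (x * Real.log (Real.sqrt (y / x))) := by rw [h1]; ring
  _ ≤ 2 * (x * Real.sqrt (y / x)) := by nlinarith [h2, hx]
  _ = 2 * Real.sqrt (x * y) := by rw [h3]

private lemma sub_add_log {a b I : ℝ} (ha : 0 ≤ a) (hb : 0 < b) (hI : 0 < I) :
    (a + b) * Real.log (I / (a + b)) ≤ a * Real.log (I / a) + b * Real.log (I / b) := by
  rcases eq_or_lt_of_le ha with rfl | ha
  · simp
  · have hab : 0 < a + b := by linarith
    rw [Real.log_div hI.ne' hab.ne', Real.log_div hI.ne' ha.ne', Real.log_div hI.ne' hb.ne']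
    have k1 : a * Real.log a ≤ a * Real.log (a + b) :=
      mul_le_mul_of_nonneg_left (Real.log_le_log ha (by linarith)) ha.le
    have k2 : b * Real.log b ≤ b * Real.log (a + b) :=
      mul_le_mul_of_nonneg_left (Real.log_le_log hb (by linarith)) hb.le
    nlinarith [k1, k2]

private lemma neg_log_le {ε : ℝ} (h0 : 0 < ε) (h2 : ε ≤ 1 / 2) : -Real.log (1 - ε) ≤ 2 * ε := by
  have h1 : (0:ℝ) < 1 - ε := by linarith
  have hexp : Real.exp (-(2 * ε)) ≤ 1 - ε := by
    have h3 : Real.exp (-(2 * ε)) * Real.exp (2 * ε) = 1 := by rw [← Real.exp_add]; simp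
    have h4 : 1 + 2 * ε ≤ Real.exp (2 * ε) := by
      have := Real.add_one_le_exp (2 * ε); linarith
    have h5 : 0 < Real.exp (-(2 * ε)) := Real.exp_pos _
    nlinarith
  have := Real.log_le_log (Real.exp_pos _) hexp
  rw [Real.log_exp] at this; linarith

private lemma map_le_smul {m : Measure X} {α : X → X} {C : ℝ≥0} (hα : Measurable α)
    (hC : ∀ s : Set X, MeasurableSet s → m (α ⁻¹' s) ≤ (C : ℝ≥0∞) * m s) :
    m.map α ≤ (C : ℝ≥0∞) • m := by
  rw [Measure.le_iff]
  intro s hs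
  rw [Measure.map_apply hα hs]
  simpa [Measure.smul_apply, smul_eq_mul] using hC s hs

private lemma lint_comp {m : Measure X} {α : X → X} {C : ℝ≥0} (hα : Measurable α)
    (hC : ∀ s : Set X, MeasurableSet s → m (α ⁻¹' s) ≤ (C : ℝ≥0∞) * m s)
    (h : X → ℝ≥0∞) (hh : AEMeasurable h m) :
    ∫⁻ x, h (α x) ∂m ≤ (C : ℝ≥0∞) * ∫⁻ x, h x ∂m := by
  have hmap := map_le_smul hα hC
  have hac : m.map α ≪ m :=
    (Measure.absolutelyContinuous_of_le hmap).trans Measure.smul_absolutelyContinuous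
  rw [← lintegral_map' (hh.mono_ac hac) hα.aemeasurable]
  calc ∫⁻ x, h x ∂(m.map α) ≤ ∫⁻ x, h x ∂((C : ℝ≥0∞) • m) := lintegral_mono' hmap le_rfl
  _ = (C : ℝ≥0∞) * ∫⁻ x, h x ∂m := lintegral_smul_measure _ _

private lemma integrable_comp {m : Measure X} {α : X → X} {C : ℝ≥0} (hα : Measurable α)
    (hC : ∀ s : Set X, MeasurableSet s → m (α ⁻¹' s) ≤ (C : ℝ≥0∞) * m s)
    {f : X → ℝ} (hf : Integrable f m) :
    Integrable (fun x => f (α x)) m ∧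
      ∫⁻ x, ‖f (α x)‖₊ ∂m ≤ (C : ℝ≥0∞) * ∫⁻ x, ‖f x‖₊ ∂m := by
  have hac : m.map α ≪ m :=
    (Measure.absolutelyContinuous_of_le (map_le_smul hα hC)).trans
      Measure.smul_absolutelyContinuous
  have hsm : AEStronglyMeasurable (fun x => f (α x)) m :=
    (hf.1.mono_ac hac).comp_aemeasurable hα.aemeasurable
  have hb := lint_comp hα hC (fun x => (‖f x‖₊ : ℝ≥0∞)) hf.1.enorm
  refine ⟨⟨hsm, ?_⟩, hb⟩
  exact hb.trans_lt (ENNReal.mul_lt_top ENNReal.coe_lt_top hf.2)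

private lemma integrable_iter {m : Measure X} {α : X → X} {C : ℝ≥0} (hα : Measurable α)
    (hC : ∀ s : Set X, MeasurableSet s → m (α ⁻¹' s) ≤ (C : ℝ≥0∞) * m s)
    (n : ℕ) {f : X → ℝ} (hf : Integrable f m) :
    Integrable (fun x => f (α^[n] x)) m ∧
      ∫⁻ x, ‖f (α^[n] x)‖₊ ∂m ≤ (C : ℝ≥0∞) ^ n * ∫⁻ x, ‖f x‖₊ ∂m := by
  induction n with
  | zero => simpa using hf
  | succ k ih =>
    have h1 := integrable_comp hα hC (f := fun x => f (α^[k] x)) ih.1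
    have he : ∀ x, f (α^[k+1] x) = f (α^[k] (α x)) := fun x => by
      rw [Function.iterate_succ_apply]
    constructor
    · have := h1.1
      simpa only [← he] using this
    · calc ∫⁻ x, ‖f (α^[k+1] x)‖₊ ∂m = ∫⁻ x, ‖f (α^[k] (α x))‖₊ ∂m := by
            simp only [he]
      _ ≤ (C : ℝ≥0∞) * ∫⁻ x, ‖f (α^[k] x)‖₊ ∂m := h1.2
      _ ≤ (C : ℝ≥0∞) * ((C : ℝ≥0∞) ^ k * ∫⁻ x, ‖f x‖₊ ∂m) := mul_le_mul_right ih.2 _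
      _ = (C : ℝ≥0∞) ^ (k+1) * ∫⁻ x, ‖f x‖₊ ∂m := by rw [pow_succ]; ring

private lemma tauSum_eq_coe (m : Measure X) (α : X → X) (n : ℕ) (D : Finset (X → ℝ))
    (v : (X → ℝ) → ℝ) (f : X → ℝ)
    (hv : ∀ g ∈ Dm m D, 0 ≤ v g)
    (hI : ∀ g ∈ Dm m D, 0 < v g → wInt m α n g f ≠ 0) :
    tauSumDm m α n D v f
      = ((∑ g ∈ Dm m D, v g * Real.log (wInt m α n g f / v g) : ℝ) : EReal) := by
  rw [tauSumDm, ecoe_sum]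
  refine Finset.sum_congr rfl fun g hg => ?_
  rcases eq_or_lt_of_le (hv g hg) with h0 | h0
  · rw [tauTermR, if_pos h0.symm, ← h0]; simp
  · rw [tauTermR, if_neg h0.ne', if_neg (hI g hg h0)]

private lemma tauSum_eq_bot (m : Measure X) (α : X → X) (n : ℕ) (D : Finset (X → ℝ))
    (v : (X → ℝ) → ℝ) (f : X → ℝ) (g₁ : X → ℝ) (hg₁ : g₁ ∈ Dm m D)
    (hv : v g₁ ≠ 0) (hI : wInt m α n g₁ f = 0) : tauSumDm m α n D v f = ⊥ := by
  rw [tauSumDm, ← Finset.add_sum_erase _ _ hg₁, tauTermR, if_neg hv, if_pos hI, EReal.bot_add]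

set_option maxHeartbeats 1000000 in
/-- For every `μ₀ ∈ M(D_m)` and every `t > τ_n(μ₀,D)` there exist a neighborhood
`O(μ₀)` in `M(D)` and a measure `μ ∈ O(μ₀) ∩ Int M(D_m)` with an optimizing limit `μ'`
such that `τ_n(ν,μ,D) = Σ_{g∈D_m} ν(g)·ln(μ'(g)/μ(g)) < t` for all `ν ∈ O(μ₀)`. -/
theorem exists_nbhd_and_interior_measure
    (m : Measure X) [SigmaFinite m] (α : X → X) (hα : ShiftBounded m α)
    (n : ℕ) (hn : 0 < n) (D : Finset (X → ℝ)) (hD : IsPartUnity m D)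
    (w₀ : (X → ℝ) → ℝ) (hw₀ : w₀ ∈ MD (Dm m D))
    (t : ℝ) (ht : tauDm m α n D w₀ < (t : EReal)) :
    ∃ O : Set ((X → ℝ) → ℝ), IsOpen O ∧ w₀ ∈ O ∧
      ∃ w w' : (X → ℝ) → ℝ, w ∈ O ∧ w ∈ MD (Dm m D) ∧ (∀ g ∈ Dm m D, 0 < w g) ∧
        IsOptLimit m α n D w w' ∧
        ∀ ν ∈ O ∩ MD D, ∑ g ∈ Dm m D, ν g * Real.log (w' g / w g) < t := by
  classical
  obtain ⟨hαm, C0, hC0⟩ := hα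
  obtain ⟨C, hCdef⟩ : ∃ C : ℝ≥0, C = C0 + 1 := ⟨_, rfl⟩
  have hC : ∀ s : Set X, MeasurableSet s → m (α ⁻¹' s) ≤ (C : ℝ≥0∞) * m s := by
    intro s hs
    refine (hC0 s hs).trans (mul_le_mul_left ?_ _)
    rw [hCdef]
    exact_mod_cast (le_add_of_nonneg_right zero_le_one : C0 ≤ C0 + 1)
  -- basic facts about D_m
  have hDmD : Dm m D ⊆ D := Finset.filter_subset _ _
  have hsum1 : ∑ g ∈ Dm m D, w₀ g = 1 := hw₀.2.1
  have hDmne : (Dm m D).Nonempty := by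
    by_contra h
    rw [Finset.not_nonempty_iff_eq_empty] at h
    rw [h, Finset.sum_empty] at hsum1
    exact one_ne_zero hsum1.symm
  obtain ⟨k, hkdef⟩ : ∃ k : ℕ, k = (Dm m D).card := ⟨_, rfl⟩
  have hkpos : 0 < k := hkdef ▸ Finset.card_pos.2 hDmne
  have hm_ne : m ≠ 0 := by
    obtain ⟨g₀, hg₀⟩ := hDmne
    intro h
    have h2 := (Finset.mem_filter.1 hg₀).2
    rw [h] at h2
    simp at h2
  -- L∞ bounds
  obtain ⟨K, hKdef⟩ : ∃ K : (X → ℝ) → ℝ, K = fun g => (eLpNorm g ⊤ m).toReal := ⟨_, rfl⟩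
  have hK0 : ∀ g, 0 ≤ K g := by
    intro g; rw [hKdef]; exact ENNReal.toReal_nonneg
  have hKbd : ∀ g ∈ D, ∀ᵐ x ∂m, |g x| ≤ K g := by
    intro g hg
    have hne : eLpNorm g ⊤ m ≠ ⊤ := (hD.1 g hg).1.2.ne
    filter_upwards [ae_le_eLpNormEssSup (f := g) (μ := m)] with x hx
    have hx' : (‖g x‖₊ : ℝ≥0∞) ≤ eLpNorm g ⊤ m := by
      rw [eLpNorm_exponent_top]; exact hx
    have h3 := ENNReal.toReal_mono hne hx'
    rw [hKdef]
    simpa [Real.norm_eq_abs] using h3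
  obtain ⟨Cn, hCndef⟩ : ∃ Cn : ℝ, Cn = (C : ℝ) ^ n := ⟨_, rfl⟩
  have hCn0 : 0 ≤ Cn := by rw [hCndef]; positivity
  -- norm facts on the unit sphere
  have hfnorm : ∀ f, f ∈ UnitL1 m → (∫⁻ x, ‖f x‖₊ ∂m) = 1 := by
    intro f hf
    have h1 : ∫ x, ‖f x‖ ∂m = (∫⁻ x, ‖f x‖₊ ∂m).toReal :=
      integral_norm_eq_lintegral_enorm hf.1.1
    have h2 : ∫ x, ‖f x‖ ∂m = 1 := by simpa [Real.norm_eq_abs] using hf.2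
    rw [h2] at h1
    exact (ENNReal.toReal_eq_one_iff _).1 h1.symm
  have hcomp : ∀ f, f ∈ UnitL1 m → Integrable (fun x => f (α^[n] x)) m ∧
      ∫ x, |f (α^[n] x)| ∂m ≤ Cn := by
    intro f hf
    obtain ⟨h1, h2⟩ := integrable_iter hαm hC n hf.1
    refine ⟨h1, ?_⟩
    rw [hfnorm f hf, mul_one] at h2
    have h3 : ∫ x, |f (α^[n] x)| ∂m = (∫⁻ x, ‖f (α^[n] x)‖₊ ∂m).toReal := by
      simpa [Real.norm_eq_abs, enorm_eq_nnnorm] using integral_norm_eq_lintegral_enorm h1.1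
    rw [h3, hCndef]
    calc (∫⁻ x, ‖f (α^[n] x)‖₊ ∂m).toReal ≤ ((C : ℝ≥0∞) ^ n).toReal :=
          ENNReal.toReal_mono (by simp) h2
    _ = (C : ℝ) ^ n := by simp
  have hwInt : ∀ f ∈ UnitL1 m, ∀ g ∈ D,
      Integrable (fun x => g x * |f (α^[n] x)|) m ∧ 0 ≤ wInt m α n g f ∧
        wInt m α n g f ≤ K g * Cn := by
    intro f hf g hg
    obtain ⟨hfi, hfb⟩ := hcomp f hf
    have hgK := hKbd g hg
    have hgm : AEStronglyMeasurable g m := (hD.1 g hg).1.1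
    have habs : Integrable (fun x => |f (α^[n] x)|) m := hfi.abs
    have hdom : Integrable (fun x => K g * |f (α^[n] x)|) m := habs.const_mul _
    have hint : Integrable (fun x => g x * |f (α^[n] x)|) m := by
      refine hdom.mono' (hgm.mul habs.1) ?_
      filter_upwards [hgK] with x hx
      rw [Real.norm_eq_abs, abs_mul, abs_abs]
      exact mul_le_mul_of_nonneg_right hx (abs_nonneg _)
    have h0 : 0 ≤ wInt m α n g f := by
      refine integral_nonneg_of_ae ?_
      filter_upwards [(hD.1 g hg).2] with x hx
      exact mul_nonneg hx (abs_nonneg _)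
    refine ⟨hint, h0, ?_⟩
    have hle : wInt m α n g f ≤ ∫ x, K g * |f (α^[n] x)| ∂m := by
      refine integral_mono_ae hint hdom ?_
      filter_upwards [hgK] with x hx
      exact mul_le_mul_of_nonneg_right ((le_abs_self _).trans hx) (abs_nonneg _)
    rw [integral_const_mul] at hle
    exact hle.trans (mul_le_mul_of_nonneg_left hfb (hK0 g))
  -- the uniform bound B
  obtain ⟨B, hBdef⟩ : ∃ B : ℝ, B = 1 + ∑ g ∈ Dm m D, K g * Cn := ⟨_, rfl⟩
  have hB1 : (1:ℝ) ≤ B := by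
    rw [hBdef]
    exact le_add_of_nonneg_right (Finset.sum_nonneg fun g _ => mul_nonneg (hK0 g) hCn0)
  have hB0 : (0:ℝ) < B := lt_of_lt_of_le one_pos hB1
  have hIB : ∀ f ∈ UnitL1 m, ∀ g ∈ Dm m D, wInt m α n g f ≤ B := by
    intro f hf g hg
    refine ((hwInt f hf g (hDmD hg)).2.2).trans ?_
    have h1 : K g * Cn ≤ ∑ h ∈ Dm m D, K h * Cn :=
      Finset.single_le_sum (fun h _ => mul_nonneg (hK0 h) hCn0) hg
    rw [hBdef]; linarith
  -- a strictly positive unit vector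
  obtain ⟨p, hp_pos, hp_meas, hp_int⟩ :=
    exists_pos_lintegral_lt_of_sigmaFinite m (ε := 1) one_ne_zero
  obtain ⟨p', hp'def⟩ : ∃ p' : X → ℝ, p' = fun x => (p x : ℝ) := ⟨_, rfl⟩
  have hp'_nonneg : ∀ x, (0:ℝ) ≤ p' x := by
    intro x; rw [hp'def]; exact (p x).2
  have hp'_int : Integrable p' m := by
    rw [hp'def]
    refine ⟨(hp_meas.coe_nnreal_real).aestronglyMeasurable, ?_⟩
    simp only [HasFiniteIntegral]
    calc ∫⁻ x, (‖(p x : ℝ)‖₊ : ℝ≥0∞) ∂m = ∫⁻ x, (p x : ℝ≥0∞) ∂m := by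
          refine lintegral_congr fun x => ?_
          simp
    _ < ⊤ := hp_int.trans_le le_top
  have hc_pos : 0 < ∫ x, p' x ∂m := by
    rw [integral_pos_iff_support_of_nonneg_ae (Eventually.of_forall hp'_nonneg) hp'_int]
    have hs : Function.support p' = Set.univ :=
      Set.eq_univ_of_forall fun x =>
        Function.mem_support.2 (by
          rw [hp'def]
          exact NNReal.coe_ne_zero.2 (hp_pos x).ne')
    rw [hs]
    exact Measure.measure_univ_pos.2 hm_ne
  obtain ⟨c, hcdef⟩ : ∃ c : ℝ, c = ∫ x, p' x ∂m := ⟨_, rfl⟩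
  have hc_pos' : 0 < c := hcdef ▸ hc_pos
  obtain ⟨fp, hfpdef⟩ : ∃ fp : X → ℝ, fp = fun x => c⁻¹ * p' x := ⟨_, rfl⟩
  have hfp_pos : ∀ x, 0 < fp x := by
    intro x
    rw [hfpdef]
    exact mul_pos (inv_pos.2 hc_pos') (by rw [hp'def]; exact hp_pos x)
  have hfp_mem : fp ∈ UnitL1 m := by
    constructor
    · rw [hfpdef]; exact hp'_int.const_mul _
    · have h1 : ∫ x, |fp x| ∂m = ∫ x, fp x ∂m :=
        integral_congr_ae (Eventually.of_forall fun x => abs_of_pos (hfp_pos x))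
      rw [h1]
      simp only [hfpdef]
      rw [integral_const_mul, ← hcdef]
      exact inv_mul_cancel₀ hc_pos'.ne'
  have hfp_wpos : ∀ g ∈ Dm m D, 0 < wInt m α n g fp := by
    intro g hg
    have hgd := hDmD hg
    have hint := (hwInt fp hfp_mem g hgd).1
    have hnn : (0 : X → ℝ) ≤ᵐ[m] fun x => g x * |fp (α^[n] x)| := by
      filter_upwards [(hD.1 g hgd).2] with x hx
      exact mul_nonneg hx (abs_nonneg _)
    rw [wInt, integral_pos_iff_support_of_nonneg_ae hnn hint]
    have hsupp : {x | g x ≠ 0} ⊆ Function.support fun x => g x * |fp (α^[n] x)| := by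
      intro x hx
      exact mul_ne_zero hx (abs_ne_zero.2 (hfp_pos _).ne')
    refine lt_of_lt_of_le ?_ (measure_mono hsupp)
    rw [pos_iff_ne_zero]
    intro hnull
    have hg0 : g =ᵐ[m] 0 := by
      rw [Filter.EventuallyEq, ae_iff]
      simpa using hnull
    have hz : (∫⁻ x, ENNReal.ofReal (g x) ∂m) = 0 := by
      have hg0' : (fun x => ENNReal.ofReal (g x)) =ᵐ[m] fun _ => 0 := by
        filter_upwards [hg0] with x hx
        simp only [Pi.zero_apply] at hx
        simp [hx]
      rw [lintegral_congr_ae hg0', lintegral_zero]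
    exact (Finset.mem_filter.1 hg).2 hz
  -- choose r and ε
  obtain ⟨r, hr1, hr2⟩ := EReal.exists_between_coe_real ht
  have hrt : r < t := EReal.coe_lt_coe_iff.1 hr2
  obtain ⟨M, hMdef⟩ : ∃ M : ℝ, M = |r| + 2 + 2 * k * Real.sqrt B + 1 := ⟨_, rfl⟩
  have hM0 : 0 < M := by rw [hMdef]; positivity
  obtain ⟨ε, hεdef⟩ : ∃ ε : ℝ, ε = min (1/2) (((t - r)/(2*M))^2) := ⟨_, rfl⟩
  have hε0 : 0 < ε := by
    rw [hεdef]
    exact lt_min (by norm_num) (pow_pos (div_pos (by linarith) (by linarith)) 2)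
  have hε2 : ε ≤ 1/2 := by rw [hεdef]; exact min_le_left _ _
  have hε1 : ε < 1 := lt_of_le_of_lt hε2 (by norm_num)
  have h1ε : 0 < 1 - ε := by linarith
  have hsqε : Real.sqrt ε ≤ (t - r)/(2*M) := by
    rw [hεdef]
    calc Real.sqrt (min (1/2) (((t - r)/(2*M))^2)) ≤ Real.sqrt (((t - r)/(2*M))^2) :=
          Real.sqrt_le_sqrt (min_le_right _ _)
    _ = (t - r)/(2*M) := Real.sqrt_sq (le_of_lt (div_pos (by linarith) (by linarith)))
  obtain ⟨β, hβdef⟩ : ∃ β : ℝ, β = r + ε*|r| + 2*ε + 2*k*Real.sqrt (B*ε) := ⟨_, rfl⟩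
  have hεsq : ε ≤ Real.sqrt ε := by
    nlinarith [Real.sq_sqrt hε0.le, Real.sqrt_nonneg ε, Real.sqrt_le_one.2 hε1.le]
  have hβt : β < t := by
    have e2 : Real.sqrt (B*ε) = Real.sqrt B * Real.sqrt ε := Real.sqrt_mul hB0.le ε
    have a1 : ε * |r| ≤ Real.sqrt ε * |r| := mul_le_mul_of_nonneg_right hεsq (abs_nonneg r)
    have a4 : (0:ℝ) ≤ Real.sqrt ε := Real.sqrt_nonneg ε
    have a5 : (0:ℝ) ≤ 2*(k:ℝ)*Real.sqrt B := by positivity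
    have e3 : β ≤ r + Real.sqrt ε * M := by
      rw [hβdef, hMdef]
      nlinarith [a1, hεsq, e2, a4, a5]
    have e4 : Real.sqrt ε * M ≤ (t - r)/2 := by
      have h5 := mul_le_mul_of_nonneg_right hsqε hM0.le
      calc Real.sqrt ε * M ≤ (t - r)/(2*M) * M := h5
      _ = (t - r)/2 := by
            have hMne : M ≠ 0 := hM0.ne'
            field_simp
    linarith
  have hr2εβ : r + 2*ε ≤ β := by
    rw [hβdef]
    have h6 : (0:ℝ) ≤ 2*k*Real.sqrt (B*ε) := by positivity
    nlinarith [abs_nonneg r, hε0.le]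
  -- the measure w
  obtain ⟨u, hudef⟩ : ∃ u : ℝ, u = (k:ℝ)⁻¹ := ⟨_, rfl⟩
  have hu0 : 0 < u := by
    rw [hudef]
    exact inv_pos.2 (by exact_mod_cast hkpos)
  have hu1 : u ≤ 1 := by
    rw [hudef]
    exact inv_le_one_of_one_le₀ (by exact_mod_cast hkpos)
  obtain ⟨w, hwdef⟩ : ∃ w : (X → ℝ) → ℝ,
      w = fun g => (1-ε) * w₀ g + ε * (if g ∈ Dm m D then u else 0) := ⟨_, rfl⟩
  have hw0 : ∀ g ∈ Dm m D, w g = (1-ε) * w₀ g + ε * u := by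
    intro g hg; simp [hwdef, hg]
  have hwpos : ∀ g ∈ Dm m D, 0 < w g := by
    intro g hg
    rw [hw0 g hg]
    have := hw₀.1 g hg
    nlinarith [hε0, h1ε, hu0]
  have hwMD : w ∈ MD (Dm m D) := by
    refine ⟨fun g hg => (hwpos g hg).le, ?_, ?_⟩
    · calc ∑ g ∈ Dm m D, w g
          = ∑ g ∈ Dm m D, ((1-ε) * w₀ g + ε * u) :=
            Finset.sum_congr rfl fun g hg => hw0 g hg
      _ = (1-ε) * ∑ g ∈ Dm m D, w₀ g + (k:ℝ) * (ε * u) := by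
            rw [Finset.sum_add_distrib, ← Finset.mul_sum, Finset.sum_const, ← hkdef,
              nsmul_eq_mul]
      _ = 1 := by
            rw [hsum1, hudef]
            have hkne : (k:ℝ) ≠ 0 := by exact_mod_cast hkpos.ne'
            field_simp
            ring
    · intro g hg
      simp [hwdef, hg, hw₀.2.2 g hg]
  -- the key per-element inequality
  have hkey : ∀ g ∈ Dm m D, ∀ I : ℝ, 0 < I → I ≤ B →
      w g * Real.log (I / w g) ≤
        (1-ε) * (w₀ g * Real.log (I / w₀ g)) + (1-ε) * (-Real.log (1-ε)) * w₀ g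
          + 2 * Real.sqrt (B * ε) := by
    intro g hg I hI hIB'
    have hbu : 0 < ε * u := mul_pos hε0 hu0
    have hblog : (ε*u) * Real.log (I / (ε*u)) ≤ 2 * Real.sqrt (B * ε) := by
      have h1 : (ε*u) * Real.log (I/(ε*u)) ≤ (ε*u) * Real.log (B/(ε*u)) := by
        refine mul_le_mul_of_nonneg_left ?_ hbu.le
        exact Real.log_le_log (by positivity) (by gcongr)
      have h2 := sqrt_bound hbu hB0
      have h3 : Real.sqrt (ε*u*B) ≤ Real.sqrt (B*ε) := by
        refine Real.sqrt_le_sqrt ?_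
        have h7 : ε * B * u ≤ ε * B * 1 :=
          mul_le_mul_of_nonneg_left hu1 (mul_nonneg hε0.le hB0.le)
        nlinarith [h7]
      linarith
    rcases eq_or_lt_of_le (hw₀.1 g hg) with h0 | h0
    · rw [hw0 g hg, ← h0]
      simpa using hblog
    · have ha : 0 < (1-ε) * w₀ g := mul_pos h1ε h0
      have hs := sub_add_log (a := (1-ε) * w₀ g) (b := ε*u) ha.le hbu hI
      rw [hw0 g hg]
      have hexp : ((1-ε) * w₀ g) * Real.log (I / ((1-ε) * w₀ g)) =
          (1-ε) * (w₀ g * Real.log (I / w₀ g)) + (1-ε) * (-Real.log (1-ε)) * w₀ g := by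
        rw [Real.log_div hI.ne' (ne_of_gt ha), Real.log_mul h1ε.ne' h0.ne',
          Real.log_div hI.ne' h0.ne']
        ring
      calc ((1-ε) * w₀ g + ε*u) * Real.log (I / ((1-ε) * w₀ g + ε*u))
          ≤ ((1-ε) * w₀ g) * Real.log (I/((1-ε) * w₀ g)) + (ε*u) * Real.log (I/(ε*u)) := hs
      _ ≤ _ := by rw [hexp]; linarith
  -- upper bound for tauDm w
  have hupper : ∀ f ∈ UnitL1 m, tauSumDm m α n D w f ≤ (β : EReal) := by
    intro f hf
    by_cases hzero : ∃ g ∈ Dm m D, wInt m α n g f = 0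
    · obtain ⟨g₁, hg₁, hI⟩ := hzero
      rw [tauSum_eq_bot m α n D w f g₁ hg₁ (hwpos g₁ hg₁).ne' hI]
      exact bot_le
    push_neg at hzero
    have hIpos : ∀ g ∈ Dm m D, 0 < wInt m α n g f := fun g hg =>
      lt_of_le_of_ne (hwInt f hf g (hDmD hg)).2.1 (Ne.symm (hzero g hg))
    rw [tauSum_eq_coe m α n D w f (fun g hg => (hwpos g hg).le) (fun g hg _ => hzero g hg),
      EReal.coe_le_coe_iff]
    have hs₀le : tauSumDm m α n D w₀ f ≤ tauDm m α n D w₀ :=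
      le_iSup₂ (f := fun f (_ : f ∈ UnitL1 m) => tauSumDm m α n D w₀ f) f hf
    have hcoe₀ := tauSum_eq_coe m α n D w₀ f hw₀.1 (fun g hg _ => hzero g hg)
    have hs₀r : ∑ g ∈ Dm m D, w₀ g * Real.log (wInt m α n g f / w₀ g) ≤ r := by
      rw [hcoe₀] at hs₀le
      exact (EReal.coe_lt_coe_iff.1 (lt_of_le_of_lt hs₀le hr1)).le
    have hterm : ∀ g ∈ Dm m D, w g * Real.log (wInt m α n g f / w g)
        ≤ (1-ε) * (w₀ g * Real.log (wInt m α n g f / w₀ g))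
          + (1-ε) * (-Real.log (1-ε)) * w₀ g + 2 * Real.sqrt (B * ε) :=
      fun g hg => hkey g hg _ (hIpos g hg) (hIB f hf g hg)
    have hsum := Finset.sum_le_sum hterm
    rw [Finset.sum_add_distrib, Finset.sum_add_distrib, ← Finset.mul_sum, ← Finset.mul_sum,
      Finset.sum_const, ← hkdef, nsmul_eq_mul, hsum1, mul_one] at hsum
    have m1 : (1-ε) * (∑ g ∈ Dm m D, w₀ g * Real.log (wInt m α n g f / w₀ g))
        ≤ (1-ε) * r := mul_le_mul_of_nonneg_left hs₀r h1ε.le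
    have m2 : (1-ε) * r ≤ r + ε*|r| := by
      nlinarith [le_abs_self r, neg_abs_le r, hε0.le]
    have m3 : (1-ε) * (-Real.log (1-ε)) ≤ 2*ε := by
      have h := neg_log_le hε0 hε2
      have hl : 0 ≤ -Real.log (1-ε) := by
        have := Real.log_nonpos (by linarith : (0:ℝ) ≤ 1 - ε) (by linarith : 1 - ε ≤ 1)
        linarith
      nlinarith
    rw [hβdef]
    have hks : (k:ℝ) * (2 * Real.sqrt (B * ε)) = 2*k*Real.sqrt (B*ε) := by ring
    linarith [hsum]
  have htauw : tauDm m α n D w ≤ (β : EReal) := by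
    rw [tauDm]
    exact iSup₂_le hupper
  -- a maximizing sequence
  obtain ⟨S, hSdef⟩ : ∃ S : Set EReal,
      S = (fun f => tauSumDm m α n D w f) '' UnitL1 m := ⟨_, rfl⟩
  have hSne : S.Nonempty := by
    rw [hSdef]
    exact ⟨_, ⟨fp, hfp_mem, rfl⟩⟩
  have hsup : tauDm m α n D w = sSup S := by
    rw [tauDm, hSdef, sSup_image]
  obtain ⟨v, hvmono, hvtend, hvmem⟩ := exists_seq_tendsto_sSup hSne (OrderTop.bddAbove S)
  rw [hSdef] at hvmem
  simp only [Set.mem_image] at hvmem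
  choose f₀ hf₀mem hf₀eq using hvmem
  obtain ⟨F, hFdef⟩ : ∃ F : ℕ → X → ℝ, F = fun i x => |f₀ i x| := ⟨_, rfl⟩
  have hFmem : ∀ i, F i ∈ UnitL1 m := by
    intro i
    constructor
    · rw [hFdef]; exact (hf₀mem i).1.abs
    · have h2 := (hf₀mem i).2
      simp only [hFdef, abs_abs]
      exact h2
  have hwIntF : ∀ i g, wInt m α n g (F i) = wInt m α n g (f₀ i) := by
    intro i g
    rw [wInt, wInt]
    simp only [hFdef, abs_abs]
  have htauF : ∀ (i : ℕ) (vv : (X → ℝ) → ℝ),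
      tauSumDm m α n D vv (F i) = tauSumDm m α n D vv (f₀ i) := by
    intro i vv
    rw [tauSumDm, tauSumDm]
    refine Finset.sum_congr rfl fun g hg => ?_
    rw [tauTermR, tauTermR, hwIntF i g]
  have hFtend : Tendsto (fun i => tauSumDm m α n D w (F i)) atTop (𝓝 (tauDm m α n D w)) := by
    have hfun : (fun i => tauSumDm m α n D w (F i)) = v :=
      funext fun i => (htauF i w).trans (hf₀eq i)
    rw [hfun, hsup]
    exact hvtend
  -- extract a subsequence with converging weights
  obtain ⟨x, hxdef⟩ : ∃ x : ℕ → (↥(Dm m D) → ℝ),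
      x = fun i g => wInt m α n g.1 (F i) := ⟨_, rfl⟩
  have hxmem : ∀ i, x i ∈ Set.Icc (fun _ => (0:ℝ)) (fun _ => B) := by
    intro i
    rw [hxdef, Set.mem_Icc]
    exact ⟨fun g => (hwInt (F i) (hFmem i) g.1 (hDmD g.2)).2.1,
      fun g => hIB (F i) (hFmem i) g.1 g.2⟩
  obtain ⟨a, -, φ, hφmono, hφtend⟩ := (isCompact_Icc).tendsto_subseq hxmem
  obtain ⟨w', hw'def⟩ : ∃ w' : (X → ℝ) → ℝ,
      w' = fun g => if h : g ∈ Dm m D then a ⟨g, h⟩ else 0 := ⟨_, rfl⟩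
  have hconv : ∀ g ∈ Dm m D,
      Tendsto (fun i => wInt m α n g (F (φ i))) atTop (𝓝 (w' g)) := by
    intro g hg
    have h1 := (tendsto_pi_nhds.1 hφtend) ⟨g, hg⟩
    have h2 : w' g = a ⟨g, hg⟩ := by rw [hw'def]; exact dif_pos hg
    have h3 : (fun i => ((x ∘ φ) i) ⟨g, hg⟩) = fun i => wInt m α n g (F (φ i)) := by
      funext i
      simp [hxdef, Function.comp]
    rw [h2]
    rw [h3] at h1
    exact h1
  have hFtend' : Tendsto (fun i => tauSumDm m α n D w (F (φ i))) atTop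
      (𝓝 (tauDm m α n D w)) := hFtend.comp hφmono.tendsto_atTop
  -- lower bound for tauDm w
  obtain ⟨τ₀, hτ₀def⟩ : ∃ τ₀ : ℝ,
      τ₀ = ∑ g ∈ Dm m D, w g * Real.log (wInt m α n g fp / w g) := ⟨_, rfl⟩
  have hτ₀le : ((τ₀ : ℝ) : EReal) ≤ tauDm m α n D w := by
    rw [hτ₀def, ← tauSum_eq_coe m α n D w fp (fun g hg => (hwpos g hg).le)
      (fun g hg _ => (hfp_wpos g hg).ne')]
    exact le_iSup₂ (f := fun f (_ : f ∈ UnitL1 m) => tauSumDm m α n D w f) fp hfp_mem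
  -- positivity of the limit weights
  have hw'nonneg : ∀ g ∈ Dm m D, 0 ≤ w' g := by
    intro g hg
    refine ge_of_tendsto (hconv g hg) ?_
    exact Eventually.of_forall fun i => (hwInt (F (φ i)) (hFmem _) g (hDmD hg)).2.1
  have hw'pos : ∀ g ∈ Dm m D, 0 < w' g := by
    intro g₁ hg₁
    rcases (hw'nonneg g₁ hg₁).lt_or_eq with h | h
    · exact h
    exfalso
    obtain ⟨Csum, hCsumdef⟩ : ∃ Csum : ℝ,
        Csum = ∑ h ∈ (Dm m D).erase g₁, w h * Real.log (B / w h) := ⟨_, rfl⟩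
    have hbound : ∀ h ∈ (Dm m D).erase g₁, ∀ i : ℕ,
        tauTermR m α n (w h) (F (φ i)) h ≤ ((w h * Real.log (B / w h) : ℝ) : EReal) := by
      intro h hh i
      have hhD := Finset.mem_of_mem_erase hh
      rw [tauTermR, if_neg (hwpos h hhD).ne']
      by_cases hI : wInt m α n h (F (φ i)) = 0
      · rw [if_pos hI]; exact bot_le
      · rw [if_neg hI, EReal.coe_le_coe_iff]
        have hIpos : 0 < wInt m α n h (F (φ i)) :=
          lt_of_le_of_ne (hwInt _ (hFmem _) h (hDmD hhD)).2.1 (Ne.symm hI)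
        refine mul_le_mul_of_nonneg_left ?_ (hwpos h hhD).le
        refine Real.log_le_log (div_pos hIpos (hwpos h hhD)) ?_
        rw [div_eq_mul_inv, div_eq_mul_inv]
        exact mul_le_mul_of_nonneg_right (hIB (F (φ i)) (hFmem (φ i)) h hhD)
          (inv_nonneg.2 (hwpos h hhD).le)
    obtain ⟨tgt, htgtdef⟩ : ∃ tgt : ℝ, tgt = (τ₀ - 1) - Csum := ⟨_, rfl⟩
    obtain ⟨δ, hδdef⟩ : ∃ δ : ℝ, δ = w g₁ * Real.exp (tgt / w g₁) := ⟨_, rfl⟩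
    have hδ0 : 0 < δ := by
      rw [hδdef]
      exact mul_pos (hwpos g₁ hg₁) (Real.exp_pos _)
    have hev : ∀ᶠ i in atTop, wInt m α n g₁ (F (φ i)) < δ := by
      have h1 := hconv g₁ hg₁
      rw [← h] at h1
      exact h1.eventually (gt_mem_nhds hδ0)
    have hKle : tauDm m α n D w ≤ ((τ₀ - 1 : ℝ) : EReal) := by
      refine le_of_tendsto hFtend' ?_
      filter_upwards [hev] with i hi
      rw [tauSumDm, ← Finset.add_sum_erase _ _ hg₁]
      have h2 : ∑ hh ∈ (Dm m D).erase g₁, tauTermR m α n (w hh) (F (φ i)) hh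
          ≤ ((Csum : ℝ) : EReal) := by
        rw [hCsumdef, ecoe_sum]
        exact Finset.sum_le_sum fun hh hhm => hbound hh hhm i
      have h1 : tauTermR m α n (w g₁) (F (φ i)) g₁ ≤ ((tgt : ℝ) : EReal) := by
        rw [tauTermR, if_neg (hwpos g₁ hg₁).ne']
        by_cases hI : wInt m α n g₁ (F (φ i)) = 0
        · rw [if_pos hI]; exact bot_le
        · rw [if_neg hI, EReal.coe_le_coe_iff]
          have hIpos : 0 < wInt m α n g₁ (F (φ i)) :=
            lt_of_le_of_ne (hwInt _ (hFmem _) g₁ (hDmD hg₁)).2.1 (Ne.symm hI)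
          have hlog : Real.log (wInt m α n g₁ (F (φ i)) / w g₁) ≤ tgt / w g₁ := by
            have h3 : wInt m α n g₁ (F (φ i)) / w g₁ ≤ δ / w g₁ := by
              rw [div_eq_mul_inv, div_eq_mul_inv]
              exact mul_le_mul_of_nonneg_right hi.le (inv_nonneg.2 (hwpos g₁ hg₁).le)
            have h4 := Real.log_le_log (div_pos hIpos (hwpos g₁ hg₁)) h3
            have h5 : δ / w g₁ = Real.exp (tgt / w g₁) := by
              rw [hδdef, mul_comm, mul_div_assoc, div_self (hwpos g₁ hg₁).ne', mul_one]
            rw [h5, Real.log_exp] at h4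
            exact h4
          calc w g₁ * Real.log (wInt m α n g₁ (F (φ i)) / w g₁)
              ≤ w g₁ * (tgt / w g₁) := mul_le_mul_of_nonneg_left hlog (hwpos g₁ hg₁).le
          _ = tgt := by
                rw [mul_comm, div_mul_cancel₀ _ (hwpos g₁ hg₁).ne']
      calc tauTermR m α n (w g₁) (F (φ i)) g₁
            + ∑ hh ∈ (Dm m D).erase g₁, tauTermR m α n (w hh) (F (φ i)) hh
          ≤ ((tgt : ℝ) : EReal) + ((Csum : ℝ) : EReal) := add_le_add h1 h2
      _ = ((τ₀ - 1 : ℝ) : EReal) := by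
            rw [← EReal.coe_add, htgtdef]
            norm_num
    have hcontra := le_trans hτ₀le hKle
    rw [EReal.coe_le_coe_iff] at hcontra
    linarith
  -- identification of the limit
  have hevpos : ∀ᶠ i in atTop, ∀ g ∈ Dm m D, 0 < wInt m α n g (F (φ i)) := by
    rw [Filter.eventually_all_finset]
    intro g hg
    exact (hconv g hg).eventually (lt_mem_nhds (hw'pos g hg))
  have hs'tend : Tendsto (fun i => ∑ g ∈ Dm m D, w g * Real.log (wInt m α n g (F (φ i)) / w g))
      atTop (𝓝 (∑ g ∈ Dm m D, w g * Real.log (w' g / w g))) := by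
    refine tendsto_finset_sum _ fun g hg => ?_
    refine Tendsto.const_mul _ ?_
    exact ((hconv g hg).div_const _).log
      (div_ne_zero (hw'pos g hg).ne' (hwpos g hg).ne')
  have hident : tauDm m α n D w
      = ((∑ g ∈ Dm m D, w g * Real.log (w' g / w g) : ℝ) : EReal) := by
    have hcongr : (fun i => ((∑ g ∈ Dm m D,
          w g * Real.log (wInt m α n g (F (φ i)) / w g) : ℝ) : EReal))
        =ᶠ[atTop] fun i => tauSumDm m α n D w (F (φ i)) := by
      filter_upwards [hevpos] with i hi
      exact (tauSum_eq_coe m α n D w (F (φ i)) (fun g hg => (hwpos g hg).le)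
        (fun g hg _ => (hi g hg).ne')).symm
    have h2 : Tendsto (fun i => tauSumDm m α n D w (F (φ i))) atTop
        (𝓝 ((∑ g ∈ Dm m D, w g * Real.log (w' g / w g) : ℝ) : EReal)) :=
      Tendsto.congr' hcongr (EReal.tendsto_coe.2 hs'tend)
    exact tendsto_nhds_unique hFtend' h2
  -- the neighborhood O
  obtain ⟨O, hOdef⟩ : ∃ O : Set ((X → ℝ) → ℝ),
      O = {ν | ∑ g ∈ Dm m D, ν g * Real.log (w' g / w g) < t} := ⟨_, rfl⟩
  have hOopen : IsOpen O := by
    rw [hOdef]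
    have hcont : Continuous fun ν : (X → ℝ) → ℝ =>
        ∑ g ∈ Dm m D, ν g * Real.log (w' g / w g) :=
      continuous_finset_sum _ fun g _ => (continuous_apply g).mul continuous_const
    exact isOpen_lt hcont continuous_const
  have hwO : w ∈ O := by
    have h1 : ((∑ g ∈ Dm m D, w g * Real.log (w' g / w g) : ℝ) : EReal) ≤ (β : EReal) :=
      hident ▸ htauw
    have h2 := EReal.coe_le_coe_iff.1 h1
    rw [hOdef]
    show ∑ g ∈ Dm m D, w g * Real.log (w' g / w g) < t
    linarith
  -- w₀ ∈ O
  have hs₀tend : Tendsto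
      (fun i => ∑ g ∈ Dm m D, w₀ g * Real.log (wInt m α n g (F (φ i)) / w₀ g)) atTop
      (𝓝 (∑ g ∈ Dm m D, w₀ g * Real.log (w' g / w₀ g))) := by
    refine tendsto_finset_sum _ fun g hg => ?_
    rcases eq_or_lt_of_le (hw₀.1 g hg) with h0 | h0
    · simp [← h0]
    · exact (((hconv g hg).div_const _).log
        (div_ne_zero (hw'pos g hg).ne' h0.ne')).const_mul _
  have hs₀le : ∀ᶠ i in atTop,
      ∑ g ∈ Dm m D, w₀ g * Real.log (wInt m α n g (F (φ i)) / w₀ g) ≤ r := by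
    filter_upwards [hevpos] with i hi
    have hcoe := tauSum_eq_coe m α n D w₀ (F (φ i)) hw₀.1 (fun g hg _ => (hi g hg).ne')
    have hle : tauSumDm m α n D w₀ (F (φ i)) ≤ tauDm m α n D w₀ :=
      le_iSup₂ (f := fun f (_ : f ∈ UnitL1 m) => tauSumDm m α n D w₀ f) (F (φ i))
        (hFmem (φ i))
    rw [hcoe] at hle
    exact (EReal.coe_lt_coe_iff.1 (lt_of_le_of_lt hle hr1)).le
  have hS₀ : (∑ g ∈ Dm m D, w₀ g * Real.log (w' g / w₀ g)) ≤ r :=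
    le_of_tendsto hs₀tend hs₀le
  have hw₀O : w₀ ∈ O := by
    rw [hOdef]
    show ∑ g ∈ Dm m D, w₀ g * Real.log (w' g / w g) < t
    have hterm : ∀ g ∈ Dm m D, w₀ g * Real.log (w' g / w g)
        ≤ w₀ g * Real.log (w' g / w₀ g) + w₀ g * (2*ε) := by
      intro g hg
      rcases eq_or_lt_of_le (hw₀.1 g hg) with h0 | h0
      · rw [← h0]; simp
      · have hsplit : Real.log (w' g / w g)
            = Real.log (w' g / w₀ g) + Real.log (w₀ g / w g) := by
          rw [Real.log_div (hw'pos g hg).ne' (hwpos g hg).ne',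
            Real.log_div (hw'pos g hg).ne' h0.ne', Real.log_div h0.ne' (hwpos g hg).ne']
          ring
        have hlast : Real.log (w₀ g / w g) ≤ 2*ε := by
          have hw_ge : (1-ε) * w₀ g ≤ w g := by
            rw [hw0 g hg]
            nlinarith [hε0.le, hu0.le]
          have hq : w₀ g / w g ≤ (1-ε)⁻¹ := by
            rw [div_le_iff₀ (hwpos g hg), inv_mul_eq_div, le_div_iff₀ h1ε]
            linarith
          have h4 := Real.log_le_log (div_pos h0 (hwpos g hg)) hq
          rw [Real.log_inv] at h4
          have h5 := neg_log_le hε0 hε2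
          linarith
        rw [hsplit, mul_add]
        have h6 := mul_le_mul_of_nonneg_left hlast h0.le
        linarith
    have hsum := Finset.sum_le_sum hterm
    rw [Finset.sum_add_distrib, ← Finset.sum_mul, hsum1, one_mul] at hsum
    linarith [hS₀, hr2εβ, hβt]
  -- conclusion
  refine ⟨O, hOopen, hw₀O, w, w', hwO, hwMD, hwpos, ?_, ?_⟩
  · exact ⟨fun i => F (φ i),
      fun i => ⟨hFmem (φ i), Eventually.of_forall fun x => by rw [hFdef]; exact abs_nonneg _⟩,
      fun g hg => hconv g hg, hFtend'⟩
  · intro ν hν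
    have h1 := hν.1
    rw [hOdef] at h1
    exact h1

end TEntropyPaper
end
end
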